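/- Finite Dyson formula with remainder: Let A be a unital Banach algebra and a, b ∈ A. Then for every N ∈ ℕ, e^{a+b} = e^a + ∑_{n=1}^N ∫_{Δ_n} e^{s_0 a} b e^{s_1 a} ⋯ b e^{s_n a} ds + ∫_{Δ_{N+1}} e^{s_0 a} b ⋯ e^{s_N a} b e^{s_{N+1}(a+b)} ds. -/

import Mathlib

open MeasureTheory

open NormedSpace

set_option linter.unusedSectionVars false
open MeasureTheory NormedSpace

section
variable {A : Type*} [NormedRing A] [NormedAlgebra ℂ A] [CompleteSpace A]

/-- the simplex-like set -/
def Ssimp (n : ℕ) : Set (Fin n → ℝ) := {s | (∀ j, 0 ≤ s j) ∧ ∑ j, s j ≤ 1}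

lemma isClosed_Ssimp (n : ℕ) : IsClosed (Ssimp n) := by
  have h1 : IsClosed {s : Fin n → ℝ | ∀ j, 0 ≤ s j} := by
    rw [Set.setOf_forall]
    exact isClosed_iInter fun j => isClosed_le continuous_const (continuous_apply j)
  have h2 : IsClosed {s : Fin n → ℝ | ∑ j, s j ≤ 1} :=
    isClosed_le (by continuity) continuous_const
  exact h1.inter h2

lemma measurableSet_Ssimp (n : ℕ) : MeasurableSet (Ssimp n) :=
  (isClosed_Ssimp n).measurableSet


lemma isCompact_Ssimp (n : ℕ) : IsCompact (Ssimp n) := by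
  refine IsCompact.of_isClosed_subset (isCompact_univ_pi fun _ : Fin n => isCompact_Icc (a := (0:ℝ)) (b := 1))
    (isClosed_Ssimp n) ?_
  intro s hs
  refine Set.mem_univ_pi.2 fun j => ⟨hs.1 j, ?_⟩
  exact le_trans (Finset.single_le_sum (fun i _ => hs.1 i) (Finset.mem_univ j)) hs.2

noncomputable def ratAlg : NormedAlgebra ℚ A := NormedAlgebra.restrictScalars ℚ ℂ A

attribute [local instance] ratAlg

variable (a b : A)

noncomputable def Ifun (n : ℕ) (s : Fin (n + 1) → ℝ) : A :=
  exp ((1 - ∑ j, s j) • a) * (List.ofFn fun j : Fin (n + 1) => b * exp (s j • a)).prod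

noncomputable def Rfun (n : ℕ) (s : Fin (n + 1) → ℝ) : A :=
  exp ((1 - ∑ j, s j) • a) *
    (List.ofFn fun j : Fin n => b * exp (s j.castSucc • a)).prod *
    (b * exp (s (Fin.last n) • (a + b)))

noncomputable def Dfun (n : ℕ) (s : Fin (n + 1) → ℝ) : A :=
  exp ((1 - ∑ j, s j) • a) *
    (List.ofFn fun j : Fin n => b * exp (s j.castSucc • a)).prod *
    (b * (exp (s (Fin.last n) • (a + b)) - exp (s (Fin.last n) • a)))

noncomputable def Wfun (n : ℕ) (p : ℝ × (Fin (n + 1) → ℝ)) : A :=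
  exp ((1 - ∑ j, p.2 j) • a) *
    ((List.ofFn fun j : Fin n => b * exp (p.2 j.castSucc • a)).prod *
      (b * exp ((p.2 (Fin.last n) - p.1) • a))) *
    (b * exp (p.1 • (a + b)))

lemma continuous_ofFn_prod {n : ℕ} {X : Type*} [TopologicalSpace X]
    (g : Fin n → X → A) (hg : ∀ j, Continuous (g j)) :
    Continuous fun x => (List.ofFn fun j => g j x).prod := by
  simp only [List.ofFn_eq_map]
  exact continuous_list_prod _ fun j _ => hg j

lemma continuous_expsmul {X : Type*} [TopologicalSpace X] {c : X → ℝ} (hc : Continuous c)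
    (x : A) : Continuous fun s => exp (c s • x) :=
  exp_continuous.comp (hc.smul continuous_const)

lemma continuous_sum_fin (n : ℕ) : Continuous fun s : Fin n → ℝ => ∑ j, s j := by
  continuity

lemma continuous_Ifun (n : ℕ) : Continuous (Ifun a b n) := by
  refine Continuous.mul (continuous_expsmul (by continuity) a) ?_
  exact continuous_ofFn_prod _ fun j =>
    continuous_const.mul (continuous_expsmul (continuous_apply j) a)

lemma continuous_Rfun (n : ℕ) : Continuous (Rfun a b n) := by
  refine Continuous.mul (Continuous.mul (continuous_expsmul (by continuity) a)
    (continuous_ofFn_prod _ fun j =>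
      continuous_const.mul (continuous_expsmul (continuous_apply j.castSucc) a))) ?_
  exact continuous_const.mul (continuous_expsmul (continuous_apply (Fin.last n)) (a + b))

lemma continuous_Dfun (n : ℕ) : Continuous (Dfun a b n) := by
  refine Continuous.mul (Continuous.mul (continuous_expsmul (by continuity) a)
    (continuous_ofFn_prod _ fun j =>
      continuous_const.mul (continuous_expsmul (continuous_apply j.castSucc) a))) ?_
  exact continuous_const.mul ((continuous_expsmul (continuous_apply (Fin.last n)) (a + b)).sub
    (continuous_expsmul (continuous_apply (Fin.last n)) a))

lemma integrableOn_Ssimp {n : ℕ} {f : (Fin n → ℝ) → A} (hf : Continuous f) :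
    IntegrableOn f (Ssimp n) volume :=
  hf.continuousOn.integrableOn_compact (isCompact_Ssimp n)


def eLast (n : ℕ) : Fin (n + 1) → ℝ := Pi.single (Fin.last n) 1

section snoclemmas
variable {n : ℕ}

lemma sigma_castSucc (s : Fin (n + 1) → ℝ) (u : ℝ) (j : Fin n) :
    (s - u • eLast n) j.castSucc = s j.castSucc := by
  simp [eLast, Pi.single_apply, (Fin.castSucc_lt_last j).ne]

lemma sigma_last (s : Fin (n + 1) → ℝ) (u : ℝ) :
    (s - u • eLast n) (Fin.last n) = s (Fin.last n) - u := by
  simp [eLast]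

lemma sum_sigma (s : Fin (n + 1) → ℝ) (u : ℝ) :
    ∑ j, (s - u • eLast n) j = (∑ j, s j) - u := by
  simp only [Pi.sub_apply, Finset.sum_sub_distrib]
  congr 1
  simp [eLast, Pi.single_apply, Finset.sum_ite_eq']

lemma sum_snoc_sigma (s : Fin (n + 1) → ℝ) (u : ℝ) :
    ∑ j, (Fin.snoc (s - u • eLast n) u : Fin (n + 2) → ℝ) j
      = ∑ j, s j := by
  rw [Fin.sum_univ_castSucc]
  simp only [Fin.snoc_castSucc, Fin.snoc_last, sum_sigma]
  ring

lemma nonneg_snoc_iff (x : Fin (n + 1) → ℝ) (u : ℝ) :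
    (∀ j, 0 ≤ (Fin.snoc x u : Fin (n + 2) → ℝ) j) ↔ (∀ j, 0 ≤ x j) ∧ 0 ≤ u := by
  constructor
  · intro h
    refine ⟨fun j => ?_, ?_⟩
    · have := h j.castSucc; rwa [Fin.snoc_castSucc] at this
    · have := h (Fin.last _); rwa [Fin.snoc_last] at this
  · rintro ⟨h1, h2⟩ j
    refine Fin.lastCases ?_ (fun i => ?_) j
    · simpa using h2
    · simpa using h1 i

lemma nonneg_sigma_iff (s : Fin (n + 1) → ℝ) (u : ℝ) :
    (∀ j, 0 ≤ (s - u • eLast n) j) ↔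
      (∀ i : Fin n, 0 ≤ s i.castSucc) ∧ u ≤ s (Fin.last n) := by
  constructor
  · intro h
    refine ⟨fun i => ?_, ?_⟩
    · have := h i.castSucc; rwa [sigma_castSucc] at this
    · have := h (Fin.last n); rw [sigma_last] at this; linarith
  · rintro ⟨h1, h2⟩ j
    refine Fin.lastCases ?_ (fun i => ?_) j
    · rw [sigma_last]; linarith
    · rw [sigma_castSucc]; exact h1 i

lemma mem_Ssimp_snoc (s : Fin (n + 1) → ℝ) (u : ℝ) :
    (Fin.snoc (s - u • eLast n) u : Fin (n + 2) → ℝ) ∈ Ssimp (n + 2) ↔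
      s ∈ Ssimp (n + 1) ∧ u ∈ Set.Icc 0 (s (Fin.last n)) := by
  unfold Ssimp
  rw [Set.mem_setOf_eq, Set.mem_setOf_eq, nonneg_snoc_iff, nonneg_sigma_iff, sum_snoc_sigma]
  constructor
  · rintro ⟨⟨⟨h1, h2⟩, h3⟩, h4⟩
    refine ⟨⟨fun j => ?_, h4⟩, h3, h2⟩
    refine Fin.lastCases ?_ (fun i => h1 i) j
    linarith
  · rintro ⟨⟨h1, h2⟩, h3, h4⟩
    exact ⟨⟨⟨fun i => h1 i.castSucc, h4⟩, h3⟩, h2⟩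

lemma Rfun_snoc (s : Fin (n + 1) → ℝ) (u : ℝ) :
    Rfun a b (n + 1) (Fin.snoc (s - u • eLast n) u) = Wfun a b n (u, s) := by
  have h1 : ∀ j : Fin n, (Fin.snoc (s - u • eLast n) u : Fin (n + 2) → ℝ)
      j.castSucc.castSucc = s j.castSucc := fun j => by
    rw [Fin.snoc_castSucc, sigma_castSucc]
  have h2 : (Fin.snoc (s - u • eLast n) u : Fin (n + 2) → ℝ) (Fin.last n).castSucc
      = s (Fin.last n) - u := by
    rw [Fin.snoc_castSucc, sigma_last]
  unfold Rfun Wfun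
  rw [sum_snoc_sigma, List.ofFn_succ']
  simp only [List.concat_eq_append, List.prod_append, List.prod_cons, List.prod_nil,
    mul_one, h1, h2, Fin.snoc_last, mul_assoc]
end snoclemmas


def shearEquiv (n : ℕ) : (ℝ × (Fin (n + 1) → ℝ)) ≃ᵐ ℝ × (Fin (n + 1) → ℝ) where
  toEquiv :=
  { toFun := fun p => (p.1, p.2 - p.1 • eLast n)
    invFun := fun p => (p.1, p.2 + p.1 • eLast n)
    left_inv := fun p => by simp
    right_inv := fun p => by simp }
  measurable_toFun := measurable_fst.prodMk (measurable_snd.sub (measurable_fst.smul_const _))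
  measurable_invFun := measurable_fst.prodMk (measurable_snd.add (measurable_fst.smul_const _))

lemma measurePreserving_shearEquiv (n : ℕ) :
    MeasurePreserving (shearEquiv n)
      ((volume : Measure ℝ).prod (volume : Measure (Fin (n + 1) → ℝ)))
      ((volume : Measure ℝ).prod (volume : Measure (Fin (n + 1) → ℝ))) := by
  have := MeasurePreserving.skew_product (f := fun u : ℝ => u)
    (g := fun (u : ℝ) (s : Fin (n + 1) → ℝ) => s - u • eLast n)
    (MeasurePreserving.id (volume : Measure ℝ))
    (measurable_snd.sub (measurable_fst.smul_const _))
    (Filter.Eventually.of_forall fun u =>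
      (measurePreserving_sub_right (volume : Measure (Fin (n + 1) → ℝ)) (u • eLast n)).map_eq)
  exact this

theorem duhamel (a b : A) (t : ℝ) :
    exp (t • (a + b)) - exp (t • a) =
      ∫ u in (0:ℝ)..t, exp ((t - u) • a) * b * exp (u • (a + b)) := by
  set C := exp (t • a) with hC
  have hsplit : ∀ u : ℝ, exp ((t - u) • a) = C * exp (u • (-a)) := by
    intro u
    rw [hC, ← NormedSpace.exp_add_of_commute]
    · congr 1
      rw [smul_neg, sub_smul]; abel
    · rw [smul_neg]
      exact (Commute.refl a).smul_left t |>.smul_right u |>.neg_right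
  have key : ∀ u : ℝ, HasDerivAt (fun u : ℝ => C * (exp (u • (-a)) * exp (u • (a + b))))
      (exp ((t - u) • a) * b * exp (u • (a + b))) u := by
    intro u
    have e1 : HasDerivAt (fun u : ℝ => exp (u • (-a)))
        (exp (u • (-a)) * (-a)) u := hasDerivAt_exp_smul_const (𝕂 := ℝ) (-a) u
    have e2 : HasDerivAt (fun u : ℝ => exp (u • (a + b)))
        ((a + b) * exp (u • (a + b))) u := hasDerivAt_exp_smul_const' (𝕂 := ℝ) (a + b) u
    have e3 := (e1.mul e2).const_mul C
    convert e3 using 1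
    · rfl
    rw [hsplit u]
    noncomm_ring
  have hcont : Continuous fun u : ℝ => exp ((t - u) • a) * b * exp (u • (a + b)) := by
    apply Continuous.mul
    · apply Continuous.mul
      · exact NormedSpace.exp_continuous.comp ((continuous_const.sub continuous_id).smul continuous_const)
      · exact continuous_const
    · exact NormedSpace.exp_continuous.comp (continuous_id.smul continuous_const)
  rw [intervalIntegral.integral_eq_sub_of_hasDerivAt (fun u _ => key u)
    (hcont.intervalIntegrable 0 t)]
  have h1 : C * (exp (t • (-a)) * exp (t • (a + b))) = exp (t • (a + b)) := by
    rw [← mul_assoc, hC, smul_neg, ← NormedSpace.exp_add_of_commute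
      ((Commute.refl a).smul_left t |>.smul_right t |>.neg_right)]
    rw [add_neg_cancel, NormedSpace.exp_zero, one_mul]
  rw [h1]
  simp [NormedSpace.exp_zero]

def Tset (n : ℕ) : Set (ℝ × (Fin (n + 1) → ℝ)) :=
  {p | p.2 ∈ Ssimp (n + 1) ∧ p.1 ∈ Set.Icc 0 (p.2 (Fin.last n))}

lemma comp_eq (n : ℕ) (p : ℝ × (Fin (n + 1) → ℝ)) :
    (Ssimp (n + 2)).indicator (Rfun a b (n + 1))
      ((MeasurableEquiv.piFinSuccAbove (fun _ : Fin (n + 2) => ℝ)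
        (Fin.last (n + 1))).symm (shearEquiv n p)) =
      (Tset n).indicator (Wfun a b n) p := by
  obtain ⟨u, s⟩ := p
  have he : (MeasurableEquiv.piFinSuccAbove (fun _ : Fin (n + 2) => ℝ)
      (Fin.last (n + 1))).symm (shearEquiv n (u, s))
      = (Fin.snoc (s - u • eLast n) u : Fin (n + 2) → ℝ) := by
    show (Fin.insertNthEquiv (fun _ : Fin (n + 2) => ℝ) (Fin.last (n + 1)))
      (u, s - u • eLast n) = _
    simp [Fin.insertNthEquiv, Fin.insertNth_last']
  rw [he]
  by_cases hp : (u, s) ∈ Tset n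
  · rw [Set.indicator_of_mem ((mem_Ssimp_snoc s u).2 ⟨hp.1, hp.2⟩),
      Set.indicator_of_mem hp, Rfun_snoc]
  · rw [Set.indicator_of_notMem (fun h => hp ((mem_Ssimp_snoc s u).1 h)),
      Set.indicator_of_notMem hp]

lemma inner_integral (n : ℕ) (s : Fin (n + 1) → ℝ) :
    ∫ u : ℝ, (Tset n).indicator (Wfun a b n) (u, s) =
      (Ssimp (n + 1)).indicator (Dfun a b n) s := by
  by_cases hs : s ∈ Ssimp (n + 1)
  · have ht : 0 ≤ s (Fin.last n) := hs.1 _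
    have h1 : ∀ u, (Tset n).indicator (Wfun a b n) (u, s) =
        (Set.Icc 0 (s (Fin.last n))).indicator (fun u => Wfun a b n (u, s)) u := by
      intro u
      by_cases hu : u ∈ Set.Icc 0 (s (Fin.last n))
      · have hmem : (u, s) ∈ Tset n := ⟨hs, hu⟩
        rw [Set.indicator_of_mem hmem, Set.indicator_of_mem hu]
      · rw [Set.indicator_of_notMem (fun h => hu h.2), Set.indicator_of_notMem hu]
    simp_rw [h1]
    rw [integral_indicator measurableSet_Icc, integral_Icc_eq_integral_Ioc,
      ← intervalIntegral.integral_of_le ht]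
    have h2 : ∀ u, Wfun a b n (u, s) =
        (exp ((1 - ∑ j, s j) • a) *
          (List.ofFn fun j : Fin n => b * exp (s j.castSucc • a)).prod * b) *
          (exp ((s (Fin.last n) - u) • a) * b * exp (u • (a + b))) := by
      intro u
      unfold Wfun
      simp only [mul_assoc]
    simp_rw [h2]
    have hcont : Continuous fun u : ℝ =>
        exp ((s (Fin.last n) - u) • a) * b * exp (u • (a + b)) := by
      exact ((continuous_expsmul (by continuity) a).mul continuous_const).mul
        (continuous_expsmul continuous_id (a + b))
    have hii : IntervalIntegrable (fun u : ℝ =>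
        exp ((s (Fin.last n) - u) • a) * b * exp (u • (a + b))) volume 0 (s (Fin.last n)) :=
      hcont.intervalIntegrable 0 _
    have h3 := (ContinuousLinearMap.mul ℝ A
        (exp ((1 - ∑ j, s j) • a) *
          (List.ofFn fun j : Fin n => b * exp (s j.castSucc • a)).prod * b)).intervalIntegral_comp_comm
      hii
    simp only [ContinuousLinearMap.mul_apply'] at h3
    rw [h3, ← duhamel a b (s (Fin.last n)), Set.indicator_of_mem hs]
    unfold Dfun
    simp only [mul_assoc]
  · have h1 : ∀ u, (Tset n).indicator (Wfun a b n) (u, s) = 0 := fun u =>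
      Set.indicator_of_notMem (fun h => hs h.1) _
    simp_rw [h1]
    rw [integral_zero, Set.indicator_of_notMem hs]


lemma stepB (n : ℕ) :
    ∫ s in Ssimp (n + 2), Rfun a b (n + 1) s = ∫ s in Ssimp (n + 1), Dfun a b n s := by
  set e := MeasurableEquiv.piFinSuccAbove (fun _ : Fin (n + 2) => ℝ) (Fin.last (n + 1)) with he
  have MPe : MeasurePreserving e.symm ((volume : Measure ℝ).prod volume) volume :=
    (volume_preserving_piFinSuccAbove (fun _ : Fin (n + 2) => ℝ) (Fin.last (n + 1))).symm e
  have hRInt : Integrable ((Ssimp (n + 2)).indicator (Rfun a b (n + 1))) volume :=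
    (integrable_indicator_iff (measurableSet_Ssimp _)).2
      (integrableOn_Ssimp (continuous_Rfun a b _))
  have hI1 : Integrable (fun p : ℝ × (Fin (n + 1) → ℝ) =>
      (Ssimp (n + 2)).indicator (Rfun a b (n + 1)) (e.symm p))
      ((volume : Measure ℝ).prod volume) :=
    (MPe.integrable_comp_emb e.symm.measurableEmbedding).2 hRInt
  have hI2 : Integrable (fun p : ℝ × (Fin (n + 1) → ℝ) =>
      (Tset n).indicator (Wfun a b n) p) ((volume : Measure ℝ).prod volume) := by
    have h := ((measurePreserving_shearEquiv n).integrable_comp_emb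
      (shearEquiv n).measurableEmbedding).2 hI1
    exact h.congr (Filter.Eventually.of_forall fun p => comp_eq a b n p)
  calc ∫ s in Ssimp (n + 2), Rfun a b (n + 1) s
      = ∫ s, (Ssimp (n + 2)).indicator (Rfun a b (n + 1)) s :=
        (integral_indicator (measurableSet_Ssimp _)).symm
    _ = ∫ p : ℝ × (Fin (n + 1) → ℝ), (Ssimp (n + 2)).indicator (Rfun a b (n + 1)) (e.symm p)
          ∂((volume : Measure ℝ).prod volume) := (MPe.integral_comp' _).symm
    _ = ∫ p : ℝ × (Fin (n + 1) → ℝ), (Ssimp (n + 2)).indicator (Rfun a b (n + 1))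
          (e.symm (shearEquiv n p)) ∂((volume : Measure ℝ).prod volume) :=
        ((measurePreserving_shearEquiv n).integral_comp' _).symm
    _ = ∫ p : ℝ × (Fin (n + 1) → ℝ), (Tset n).indicator (Wfun a b n) p
          ∂((volume : Measure ℝ).prod volume) :=
        integral_congr_ae (Filter.Eventually.of_forall fun p => comp_eq a b n p)
    _ = ∫ u : ℝ, ∫ s : Fin (n + 1) → ℝ, (Tset n).indicator (Wfun a b n) (u, s) :=
        integral_prod _ hI2
    _ = ∫ s : Fin (n + 1) → ℝ, ∫ u : ℝ, (Tset n).indicator (Wfun a b n) (u, s) :=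
        integral_integral_swap hI2
    _ = ∫ s : Fin (n + 1) → ℝ, (Ssimp (n + 1)).indicator (Dfun a b n) s :=
        integral_congr_ae (Filter.Eventually.of_forall fun s => inner_integral a b n s)
    _ = ∫ s in Ssimp (n + 1), Dfun a b n s := integral_indicator (measurableSet_Ssimp _)


lemma Rfun_split (n : ℕ) (s : Fin (n + 1) → ℝ) :
    Rfun a b n s = Ifun a b n s + Dfun a b n s := by
  unfold Rfun Ifun Dfun
  rw [List.ofFn_succ']
  simp only [List.concat_eq_append, List.prod_append, List.prod_cons, List.prod_nil, mul_one]
  noncomm_ring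

lemma stepLemma (n : ℕ) :
    ∫ s in Ssimp (n + 1), Rfun a b n s =
      (∫ s in Ssimp (n + 1), Ifun a b n s) + ∫ s in Ssimp (n + 2), Rfun a b (n + 1) s := by
  rw [stepB]
  rw [← integral_add (integrableOn_Ssimp (continuous_Ifun a b n))
    (integrableOn_Ssimp (continuous_Dfun a b n))]
  exact integral_congr_ae (Filter.Eventually.of_forall fun s => Rfun_split a b n s)

lemma base : exp (a + b) = exp a + ∫ s in Ssimp 1, Rfun a b 0 s := by
  have hpt : ∀ t : ℝ, (Ssimp 1).indicator (Rfun a b 0)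
      ((MeasurableEquiv.funUnique (Fin 1) ℝ).symm t) =
      (Set.Icc (0:ℝ) 1).indicator
        (fun t => exp ((1 - t) • a) * b * exp (t • (a + b))) t := by
    intro t
    have hfun : ((MeasurableEquiv.funUnique (Fin 1) ℝ).symm t) = fun _ : Fin 1 => t := rfl
    have hmem : ((fun _ : Fin 1 => t) ∈ Ssimp 1) ↔ t ∈ Set.Icc (0:ℝ) 1 := by
      constructor
      · rintro ⟨h1, h2⟩; exact ⟨h1 0, by simpa using h2⟩
      · rintro ⟨h1, h2⟩; exact ⟨fun _ => h1, by simpa using h2⟩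
    rw [hfun]
    by_cases hm : t ∈ Set.Icc (0:ℝ) 1
    · rw [Set.indicator_of_mem (hmem.2 hm), Set.indicator_of_mem hm]
      unfold Rfun
      simp [mul_assoc]
    · rw [Set.indicator_of_notMem (fun h => hm (hmem.1 h)), Set.indicator_of_notMem hm]
  have h2 : ∫ s in Ssimp 1, Rfun a b 0 s = exp (a + b) - exp a := by
    rw [← integral_indicator (measurableSet_Ssimp 1)]
    erw [← ((volume_preserving_funUnique (Fin 1) ℝ).symm _).integral_comp'
        ((Ssimp 1).indicator (Rfun a b 0)),
      show (fun t : ℝ => (Ssimp 1).indicator (Rfun a b 0)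
        ((MeasurableEquiv.funUnique (Fin 1) ℝ).symm t)) = _ from funext hpt,
      integral_indicator measurableSet_Icc, integral_Icc_eq_integral_Ioc,
      ← intervalIntegral.integral_of_le (zero_le_one' ℝ)]
    have hd := duhamel a b 1
    simp only [one_smul] at hd
    rw [← hd]
  rw [h2]
  abel

lemma dyson_aux (N : ℕ) : exp (a + b) =
    exp a + (∑ n ∈ Finset.range N, ∫ s in Ssimp (n + 1), Ifun a b n s) +
      ∫ s in Ssimp (N + 1), Rfun a b N s := by
  induction N with
  | zero => simpa using base a b
  | succ N ih =>
    rw [Finset.sum_range_succ, ih, stepLemma a b N]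
    abel

end


/-- Finite Dyson formula with remainder: for every `N`,
`e^{a+b} = e^a + ∑_{n=1}^N ∫_{Δₙ} e^{s₀a} b e^{s₁a} ⋯ b e^{sₙa} ds
  + ∫_{Δ_{N+1}} e^{s₀a} b ⋯ e^{s_N a} b e^{s_{N+1}(a+b)} ds`,
where `Δₙ = {sⱼ ≥ 0, ∑_{j=0}^n sⱼ = 1}` is parametrized by `(s₁,…,sₙ)` with
`s₀ = 1 - ∑ⱼ sⱼ`. -/
theorem dyson_finite (A : Type*) [NormedRing A] [NormedAlgebra ℂ A]
    [CompleteSpace A] (a b : A) (N : ℕ) :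
    NormedSpace.exp (a + b) =
      NormedSpace.exp a +
        (∑ n ∈ Finset.range N,
          ∫ s in {s : Fin (n + 1) → ℝ | (∀ j, 0 ≤ s j) ∧ ∑ j, s j ≤ 1},
            NormedSpace.exp ((1 - ∑ j, s j) • a) *
              (List.ofFn fun j : Fin (n + 1) =>
                b * NormedSpace.exp (s j • a)).prod) +
        ∫ s in {s : Fin (N + 1) → ℝ | (∀ j, 0 ≤ s j) ∧ ∑ j, s j ≤ 1},
          NormedSpace.exp ((1 - ∑ j, s j) • a) *
            (List.ofFn fun j : Fin N =>
              b * NormedSpace.exp (s j.castSucc • a)).prod *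
            (b * NormedSpace.exp (s (Fin.last N) • (a + b))) := by
  exact dyson_aux a b N
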